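/- Sub-Gaussian tail under large κ: if κ(θ) ≥ (1/C)·sqrt(ln(2/β))/sqrt(A''(θ)) for some constant C > 0, then P_{X∼P_θ}( |X − A'(θ)| ≥ (2+C)·sqrt(A''(θ))·sqrt(ln(2/β)) ) ≤ β. -/

import Mathlib

open MeasureTheory Real

set_option maxHeartbeats 1000000

private lemma chernoff_aux (μ : Measure ℝ) (θ c s m : ℝ) (S : Set ℝ) (hSm : MeasurableSet S)
    (hS : ∀ x ∈ S, 0 ≤ s * (x - m))
    (hI : Integrable (fun x => Real.exp ((θ + s) * x)) μ)
    (hI0 : Integrable (fun x => Real.exp (θ * x)) μ) :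
    ∫ x in S, Real.exp (θ * x - c) ∂μ ≤
      Real.exp (-(s * m) - c) * ∫ x, Real.exp ((θ + s) * x) ∂μ := by
  have hint0 : Integrable (fun x => Real.exp (θ * x - c)) μ := by
    simpa [Real.exp_sub] using hI0.div_const (Real.exp c)
  have hint1 : Integrable (fun x => Real.exp (-(s * m) - c) * Real.exp ((θ + s) * x)) μ :=
    hI.const_mul _
  have key : ∀ x ∈ S, Real.exp (θ * x - c) ≤
      Real.exp (-(s * m) - c) * Real.exp ((θ + s) * x) := by
    intro x hx
    rw [← Real.exp_add]
    apply Real.exp_le_exp.mpr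
    have := hS x hx
    nlinarith
  calc ∫ x in S, Real.exp (θ * x - c) ∂μ
      ≤ ∫ x in S, Real.exp (-(s * m) - c) * Real.exp ((θ + s) * x) ∂μ :=
        setIntegral_mono_on hint0.integrableOn hint1.integrableOn hSm key
    _ ≤ ∫ x, Real.exp (-(s * m) - c) * Real.exp ((θ + s) * x) ∂μ :=
        setIntegral_le_integral hint1
          (Filter.Eventually.of_forall fun x => by positivity)
    _ = Real.exp (-(s * m) - c) * ∫ x, Real.exp ((θ + s) * x) ∂μ := integral_const_mul _ _

private lemma taylor_aux (A A' A'' : ℝ → ℝ) (θ κ : ℝ) (hκ : 0 ≤ κ)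
    (hA' : ∀ t ∈ Set.Icc (θ - κ) (θ + κ), HasDerivAt A (A' t) t)
    (hA'' : ∀ t ∈ Set.Icc (θ - κ) (θ + κ), HasDerivAt A' (A'' t) t)
    (hbd : ∀ t ∈ Set.Icc (θ - κ) (θ + κ), |A'' t| ≤ 2 * A'' θ) :
    ∀ ε, |ε| ≤ κ → A (θ + ε) - A θ - ε * A' θ ≤ A'' θ * ε ^ 2 := by
  set D := Set.Icc (θ - κ) (θ + κ) with hD
  have hconv : Convex ℝ D := convex_Icc _ _
  have hθD : θ ∈ D := ⟨by linarith, by linarith⟩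
  -- Lipschitz bound on A'
  have lip : ∀ t ∈ D, |A' t - A' θ| ≤ 2 * A'' θ * |t - θ| := by
    intro t ht
    have := hconv.norm_image_sub_le_of_norm_hasDerivWithin_le
      (f := A') (f' := A'') (fun x hx => (hA'' x hx).hasDerivWithinAt)
      (fun x hx => by simpa [Real.norm_eq_abs] using hbd x hx) hθD ht
    simpa [Real.norm_eq_abs] using this
  set g : ℝ → ℝ := fun t => A t - A θ - (t - θ) * A' θ - A'' θ * (t - θ) ^ 2 with hg
  have hgderiv : ∀ t ∈ D, HasDerivAt g (A' t - A' θ - 2 * A'' θ * (t - θ)) t := by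
    intro t ht
    have h1 : HasDerivAt (fun t : ℝ => (t - θ) * A' θ) (A' θ) t := by
      simpa using ((hasDerivAt_id t).sub_const θ).mul_const (A' θ)
    have h2 : HasDerivAt (fun t : ℝ => A'' θ * (t - θ) ^ 2) (2 * A'' θ * (t - θ)) t := by
      have h3 : HasDerivAt (fun t : ℝ => (t - θ) ^ 2) (2 * (t - θ)) t := by
        simpa using ((hasDerivAt_id t).sub_const θ).fun_pow 2
      have := h3.const_mul (A'' θ)
      rw [show 2 * A'' θ * (t - θ) = A'' θ * (2 * (t - θ)) by ring]; exact this
    have := (((hA' t ht).sub_const (A θ)).fun_sub h1).fun_sub h2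
    convert this using 1
  have hgcont : ContinuousOn g D := fun t ht => ((hgderiv t ht).continuousAt).continuousWithinAt
  have hg0 : g θ = 0 := by simp [hg]
  intro ε hε
  have habs := abs_le.mp hε
  have hmem : θ + ε ∈ D := ⟨by linarith [habs.1], by linarith [habs.2]⟩
  rcases le_total 0 ε with hε0 | hε0
  · -- antitone on [θ, θ+κ]
    have hsub : Set.Icc θ (θ + κ) ⊆ D := Set.Icc_subset_Icc (by linarith) le_rfl
    have hint : interior (Set.Icc θ (θ + κ)) ⊆ D := interior_subset.trans hsub
    have hanti : AntitoneOn g (Set.Icc θ (θ + κ)) := by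
      apply antitoneOn_of_deriv_nonpos (convex_Icc _ _) (hgcont.mono hsub)
      · intro x hx
        exact ((hgderiv x (hint hx)).differentiableAt).differentiableWithinAt
      · intro x hx
        rw [interior_Icc] at hx
        rw [(hgderiv x (hint (by rw [interior_Icc]; exact hx))).deriv]
        have hl := lip x (hsub (Set.mem_Icc.mpr ⟨le_of_lt hx.1, le_of_lt hx.2⟩))
        have : |x - θ| = x - θ := abs_of_nonneg (by linarith [hx.1])
        rw [this] at hl
        have := abs_le.mp hl
        linarith [this.2]
    have hx : θ ∈ Set.Icc θ (θ + κ) := ⟨le_rfl, by linarith⟩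
    have hy : θ + ε ∈ Set.Icc θ (θ + κ) := ⟨by linarith, by linarith⟩
    have hle := hanti hx hy (by linarith)
    rw [hg0] at hle
    simp only [hg] at hle
    rw [show θ + ε - θ = ε from by ring] at hle
    linarith
  · -- monotone on [θ-κ, θ]
    have hsub : Set.Icc (θ - κ) θ ⊆ D := Set.Icc_subset_Icc le_rfl (by linarith)
    have hint : interior (Set.Icc (θ - κ) θ) ⊆ D := interior_subset.trans hsub
    have hmono : MonotoneOn g (Set.Icc (θ - κ) θ) := by
      apply monotoneOn_of_deriv_nonneg (convex_Icc _ _) (hgcont.mono hsub)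
      · intro x hx
        exact ((hgderiv x (hint hx)).differentiableAt).differentiableWithinAt
      · intro x hx
        rw [interior_Icc] at hx
        rw [(hgderiv x (hint (by rw [interior_Icc]; exact hx))).deriv]
        have hl := lip x (hsub (Set.mem_Icc.mpr ⟨le_of_lt hx.1, le_of_lt hx.2⟩))
        have : |x - θ| = -(x - θ) := abs_of_nonpos (by linarith [hx.2])
        rw [this] at hl
        have := abs_le.mp hl
        linarith [this.1]
    have hx : θ + ε ∈ Set.Icc (θ - κ) θ := ⟨by linarith, by linarith⟩
    have hy : θ ∈ Set.Icc (θ - κ) θ := ⟨by linarith, le_rfl⟩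
    have hle := hmono hx hy (by linarith)
    rw [hg0] at hle
    simp only [hg] at hle
    rw [show θ + ε - θ = ε from by ring] at hle
    linarith

/-- Sub-Gaussian tail under large `κ`: if `κ(θ) ≥ (1/C)·√(ln(2/β))/√(A''(θ))` for some
constant `C > 0`, then `P_{X∼P_θ}(|X − A'(θ)| ≥ (2+C)·√(A''(θ))·√(ln(2/β))) ≤ β`. -/
theorem subgaussian_tail_exponential_family (μ : Measure ℝ) (A A' A'' : ℝ → ℝ)
    (θ κ β C : ℝ)
    (hβ : β ∈ Set.Ioc (0 : ℝ) 1) (hκ : 0 < κ) (hC : 0 < C)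
    (hA : ∀ t ∈ Set.Icc (θ - κ) (θ + κ), A t = Real.log (∫ x, Real.exp (t * x) ∂μ))
    (hΦ : ∀ t ∈ Set.Icc (θ - κ) (θ + κ), Integrable (fun x => Real.exp (t * x)) μ)
    (hA' : ∀ t ∈ Set.Icc (θ - κ) (θ + κ), HasDerivAt A (A' t) t)
    (hA'' : ∀ t ∈ Set.Icc (θ - κ) (θ + κ), HasDerivAt A' (A'' t) t)
    (hstab : ∀ t ∈ Set.Icc (θ - κ) (θ + κ),
        0 < A'' t ∧ A'' θ / A'' t ∈ Set.Icc (1 / 2 : ℝ) 2)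
    (hκC : (1 / C) * Real.sqrt (Real.log (2 / β)) / Real.sqrt (A'' θ) ≤ κ) :
    ∫ x in {x : ℝ |
        (2 + C) * Real.sqrt (A'' θ) * Real.sqrt (Real.log (2 / β)) ≤ |x - A' θ|},
      Real.exp (θ * x - A θ) ∂μ ≤ β := by
  obtain ⟨hβ0, hβ1⟩ := hβ
  set L : ℝ := Real.log (2 / β) with hLdef
  have hL : 0 < L := Real.log_pos (by rw [lt_div_iff₀ hβ0]; linarith)
  have hθD : θ ∈ Set.Icc (θ - κ) (θ + κ) := ⟨by linarith, by linarith⟩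
  have hσ2 : 0 < A'' θ := (hstab θ hθD).1
  set σ : ℝ := Real.sqrt (A'' θ) with hσdef
  have hσ : 0 < σ := Real.sqrt_pos.mpr hσ2
  have hσsq : σ * σ = A'' θ := Real.mul_self_sqrt hσ2.le
  set sL : ℝ := Real.sqrt L with hsLdef
  have hsL : 0 < sL := Real.sqrt_pos.mpr hL
  have hsLsq : sL * sL = L := Real.mul_self_sqrt hL.le
  set s : ℝ := min κ (sL / σ) with hsdef
  have hs0 : 0 < s := lt_min hκ (by positivity)
  have hsκ : s ≤ κ := min_le_left _ _
  have hsσ : s ≤ sL / σ := min_le_right _ _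
  set m : ℝ := A' θ with hmdef
  set R : ℝ := (2 + C) * σ * sL with hRdef
  have hR : 0 < R := by positivity
  -- variance bound on the interval
  have hbd : ∀ t ∈ Set.Icc (θ - κ) (θ + κ), |A'' t| ≤ 2 * A'' θ := by
    intro t ht
    obtain ⟨hpos, hlo, _⟩ := hstab t ht
    rw [abs_of_pos hpos]
    rw [le_div_iff₀ hpos] at hlo
    linarith
  have taylor := taylor_aux A A' A'' θ κ hκ.le hA' hA'' hbd
  -- the exponent bound
  have hexp : A'' θ * s ^ 2 - s * R ≤ -L := by
    have h1 : A'' θ * s ^ 2 ≤ s * σ * sL := by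
      have : s * σ ≤ sL := by
        rw [← le_div_iff₀ hσ]; exact hsσ
      calc A'' θ * s ^ 2 = (s * σ) * (s * σ) := by rw [← hσsq]; ring
        _ ≤ sL * (s * σ) := by nlinarith [mul_pos hs0 hσ]
        _ = s * σ * sL := by ring
    have h2 : min 1 (1 / C) * L ≤ s * σ * sL := by
      have hκσ : sL / (C * σ) ≤ κ := by
        have : (1 / C) * sL / σ = sL / (C * σ) := by field_simp
        rw [← this]; exact hκC
      rcases le_total 1 C with h | h
      · have heq : min (1:ℝ) (1/C) = 1 / C := min_eq_right (by rw [div_le_one hC]; linarith)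
        rw [heq]
        have hs' : sL / (C * σ) ≤ s := le_min hκσ (by
          rw [div_le_div_iff₀ (by positivity) hσ]; nlinarith)
        have hC0 : C ≠ 0 := hC.ne'
        have hσ0 : σ ≠ 0 := hσ.ne'
        calc 1 / C * L = (sL / (C * σ)) * σ * sL := by
              rw [← hsLsq]; field_simp
          _ ≤ s * σ * sL := by nlinarith
      · have heq : min (1:ℝ) (1/C) = 1 := min_eq_left (by rw [le_div_iff₀ hC]; linarith)
        rw [heq, one_mul]
        have hs' : sL / σ ≤ s := le_min (le_trans (by
          rw [div_le_div_iff₀ hσ (by positivity)]; nlinarith) hκσ) le_rfl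
        have hσ0 : σ ≠ 0 := hσ.ne'
        calc L = (sL / σ) * σ * sL := by
              rw [← hsLsq]; field_simp
          _ ≤ s * σ * sL := by nlinarith
    have h3 : L ≤ (1 + C) * (min 1 (1 / C) * L) := by
      rcases le_total 1 C with h | h
      · rw [min_eq_right (by rw [div_le_one hC]; linarith)]
        rw [← mul_assoc, mul_one_div]
        have : (1:ℝ) ≤ (1 + C) / C := by rw [le_div_iff₀ hC]; linarith
        nlinarith
      · rw [min_eq_left (by rw [le_div_iff₀ hC]; linarith), one_mul]
        nlinarith
    have hmul : s * R = (2 + C) * (s * σ * sL) := by rw [hRdef]; ring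
    nlinarith [mul_le_mul_of_nonneg_left h2 (by linarith : (0:ℝ) ≤ 1 + C)]
  -- bound on the mgf integral
  have hmgf : ∀ t ∈ Set.Icc (θ - κ) (θ + κ),
      ∫ x, Real.exp (t * x) ∂μ ≤ Real.exp (A t) := by
    intro t ht
    rw [hA t ht]
    rcases le_or_gt (∫ x, Real.exp (t * x) ∂μ) 0 with h | h
    · exact h.trans (Real.exp_nonneg _)
    · rw [Real.exp_log h]
  -- the two tails
  have tail : ∀ ε : ℝ, 0 < ε → ε ≤ κ → ∀ sg : ℝ, sg = 1 ∨ sg = -1 →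
      ∫ x in {x : ℝ | R ≤ sg * (x - m)}, Real.exp (θ * x - A θ) ∂μ ≤
        Real.exp (A'' θ * ε ^ 2 - ε * R) := by
    intro ε hε hεκ sg hsg
    have hmemε : θ + sg * ε ∈ Set.Icc (θ - κ) (θ + κ) := by
      rcases hsg with h | h <;> subst h <;> constructor <;> simp <;> linarith
    have hSm : MeasurableSet {x : ℝ | R ≤ sg * (x - m)} :=
      measurableSet_le measurable_const (by fun_prop)
    have hchern := chernoff_aux μ θ (A θ) (sg * ε) (m + sg * R)
      {x : ℝ | R ≤ sg * (x - m)} hSm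
      (by
        intro x hx
        simp only [Set.mem_setOf_eq] at hx
        have hsg2 : sg * sg = 1 := by rcases hsg with h | h <;> subst h <;> norm_num
        have : sg * ε * (x - (m + sg * R)) = ε * (sg * (x - m)) - (sg * sg) * (ε * R) := by ring
        rw [this, hsg2]
        nlinarith)
      (hΦ _ hmemε) (hΦ θ hθD)
    refine hchern.trans ?_
    have hIle := hmgf _ hmemε
    have hInonneg : (0:ℝ) ≤ ∫ x, Real.exp ((θ + sg * ε) * x) ∂μ :=
      integral_nonneg fun x => Real.exp_nonneg _
    calc Real.exp (-(sg * ε * (m + sg * R)) - A θ) * ∫ x, Real.exp ((θ + sg * ε) * x) ∂μ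
        ≤ Real.exp (-(sg * ε * (m + sg * R)) - A θ) * Real.exp (A (θ + sg * ε)) :=
          mul_le_mul_of_nonneg_left hIle (Real.exp_nonneg _)
      _ = Real.exp (A (θ + sg * ε) - A θ - (sg * ε) * m - (sg * sg) * (ε * R)) := by
          rw [← Real.exp_add]; congr 1; ring
      _ ≤ Real.exp (A'' θ * ε ^ 2 - ε * R) := by
          apply Real.exp_le_exp.mpr
          have hsg2 : sg * sg = 1 := by rcases hsg with h | h <;> subst h <;> norm_num
          have habs : |sg * ε| ≤ κ := by
            rcases hsg with h | h <;> subst h <;> simpa [abs_of_pos hε] using hεκ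
          have ht := taylor (sg * ε) habs
          have hsq : (sg * ε) ^ 2 = ε ^ 2 := by rcases hsg with h | h <;> subst h <;> ring
          rw [hsq] at ht
          rw [hsg2]
          linarith
  -- combine
  have hβ2 : Real.exp (A'' θ * s ^ 2 - s * R) ≤ β / 2 := by
    have : Real.exp (A'' θ * s ^ 2 - s * R) ≤ Real.exp (-L) := Real.exp_le_exp.mpr hexp
    refine this.trans ?_
    rw [hLdef, Real.exp_neg, Real.exp_log (by positivity), inv_div]
  set S1 : Set ℝ := {x : ℝ | R ≤ 1 * (x - m)} with hS1def
  set S2 : Set ℝ := {x : ℝ | R ≤ (-1) * (x - m)} with hS2def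
  have hS1m : MeasurableSet S1 := measurableSet_le measurable_const (by fun_prop)
  have hS2m : MeasurableSet S2 := measurableSet_le measurable_const (by fun_prop)
  have hsetsub : {x : ℝ | (2 + C) * Real.sqrt (A'' θ) * Real.sqrt (Real.log (2 / β)) ≤ |x - A' θ|}
      = S1 ∪ S2 := by
    ext x
    simp only [Set.mem_setOf_eq, Set.mem_union, hS1def, hS2def, one_mul, neg_one_mul]
    rw [le_abs]
  have hdisj : Disjoint S1 S2 := by
    rw [Set.disjoint_left]
    intro x h1 h2
    simp only [hS1def, hS2def, Set.mem_setOf_eq] at h1 h2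
    nlinarith
  have hint : Integrable (fun x => Real.exp (θ * x - A θ)) μ := by
    simpa [Real.exp_sub] using (hΦ θ hθD).div_const (Real.exp (A θ))
  rw [hsetsub, setIntegral_union hdisj hS2m hint.integrableOn hint.integrableOn]
  have t1 := tail s hs0 hsκ 1 (Or.inl rfl)
  have t2 := tail s hs0 hsκ (-1) (Or.inr rfl)
  have := add_le_add (t1.trans hβ2) (t2.trans hβ2)
  linarith
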